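/- Let K be a compact Hausdorff space, ι an uncountable type, and U : ι → Set K a family of pairwise disjoint nonempty clopen subsets of K such that each U α admits a Cantor scheme of clopen subsets of K with A [] = U α. Then there exists a linear isometry T : c₀(ι) →ₗᵢ C(K, ℝ) such that for every g ≠ 0 the range of T g is a nondegenerate closed interval: there exist a b : ℝ with a < b and Set.range (T g) = Set.Icc a b. -/

import Mathlib

open scoped ZeroAtInfty

/-- A Cantor scheme of clopen subsets of `X ⊆ K`. -/
def IsClopenCantorScheme {K : Type*} [TopologicalSpace K] (X : Set K)
    (A : List Bool → Set K) : Prop :=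
  A [] = X ∧ (∀ s, (A s).Nonempty) ∧ (∀ s, IsClopen (A s)) ∧
    (∀ (s : List Bool) (i : Bool), A (s ++ [i]) ⊆ A s) ∧
    ∀ s : List Bool, A (s ++ [false]) ∩ A (s ++ [true]) = ∅

namespace Stmt4Aux

variable {K : Type*} [TopologicalSpace K] {X : Set K} {A : List Bool → Set K}

lemma scheme_append (hA : IsClopenCantorScheme X A) (t : List Bool) :
    ∀ s, A (s ++ t) ⊆ A s := by
  induction t using List.reverseRecOn with
  | nil => intro s; simp
  | append_singleton t i ih =>
      intro s
      have h : s ++ (t ++ [i]) = (s ++ t) ++ [i] := by simp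
      rw [h]
      exact (hA.2.2.2.1 (s ++ t) i).trans (ih s)

lemma scheme_subset_root (hA : IsClopenCantorScheme X A) (s : List Bool) :
    A s ⊆ X := by
  have := scheme_append hA s []
  simpa [hA.1] using this

lemma scheme_level_disjoint (hA : IsClopenCantorScheme X A) :
    ∀ s t : List Bool, s.length = t.length → s ≠ t → A s ∩ A t = ∅ := by
  intro s
  induction s using List.reverseRecOn with
  | nil =>
      intro t hlen hne
      exact absurd (List.length_eq_zero_iff.mp hlen.symm).symm hne
  | append_singleton s i ih =>
      intro t hlen hne
      rcases t.eq_nil_or_concat with rfl | ⟨t', j, rfl⟩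
      · simp at hlen
      · simp only [List.concat_eq_append, List.length_append, List.length_singleton] at hlen
        have hlen' : s.length = t'.length := by omega
        by_cases hst : s = t'
        · subst hst
          have hij : i ≠ j := by
            intro h; exact hne (by rw [h, List.concat_eq_append])
          have key := hA.2.2.2.2 s
          rw [List.concat_eq_append]
          cases i <;> cases j <;> simp_all <;>
            first
            | exact key
            | (rw [Set.inter_comm]; exact key)
        · have hd := ih t' hlen' hst
          rw [List.concat_eq_append]
          apply Set.eq_empty_of_subset_empty
          calc A (s ++ [i]) ∩ A (t' ++ [j]) ⊆ A s ∩ A t' :=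
                Set.inter_subset_inter (hA.2.2.2.1 s i) (hA.2.2.2.1 t' j)
            _ = ∅ := hd

/-- the geometric weights -/
noncomputable def cgeo (n : ℕ) : ℝ := (2:ℝ)⁻¹ ^ (n + 1)

lemma cgeo_pos (n : ℕ) : 0 < cgeo n := by rw [cgeo]; positivity

lemma cgeo_eq (n : ℕ) : cgeo n = 1 / 2 / 2 ^ n := by
  rw [cgeo, pow_succ, inv_pow]; ring

lemma cgeo_summable : Summable cgeo :=
  (summable_geometric_two' 1).congr fun n => (cgeo_eq n).symm

lemma cgeo_tsum : ∑' n, cgeo n = 1 := by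
  rw [tsum_congr cgeo_eq]; exact tsum_geometric_two' 1

/-- continuity of clopen indicators -/
lemma cont_ind {S : Set K} (h : IsClopen S) (r : ℝ) :
    Continuous (S.indicator fun _ => r) := by
  classical
  have heq : S.indicator (fun _ => r) = fun x => if x ∈ S then r else (0:ℝ) := by
    funext x; simp [Set.indicator_apply]
  rw [heq]
  apply continuous_if
  · intro a ha
    have : frontier {x | x ∈ S} = ∅ := by
      simpa [Set.setOf_mem_eq] using h.frontier_eq
    rw [this] at ha
    exact absurd ha (Set.notMem_empty a)
  · exact continuous_const.continuousOn
  · exact continuous_const.continuousOn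

/-- level-n building block -/
noncomputable def phiF (A : List Bool → Set K) (n : ℕ) (x : K) : ℝ :=
  ∑ v : Fin n → Bool, (A (List.ofFn v ++ [true])).indicator (fun _ => cgeo n) x

lemma phiF_cont (hA : IsClopenCantorScheme X A) (n : ℕ) : Continuous (phiF A n) :=
  continuous_finset_sum _ fun v _ => cont_ind (hA.2.2.1 _) _

lemma phiF_nonneg (n : ℕ) (x : K) : 0 ≤ phiF A n x :=
  Finset.sum_nonneg fun v _ => Set.indicator_nonneg (fun _ _ => (cgeo_pos n).le) x

lemma phiF_mem (hA : IsClopenCantorScheme X A) (n : ℕ) (x : K) (v : Fin n → Bool)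
    (hx : x ∈ A (List.ofFn v ++ [true])) : phiF A n x = cgeo n := by
  rw [phiF, Finset.sum_eq_single_of_mem v (Finset.mem_univ v)]
  · rw [Set.indicator_of_mem hx]
  · intro w _ hw
    apply Set.indicator_of_notMem
    intro hxw
    have hne : List.ofFn w ++ [true] ≠ List.ofFn v ++ [true] := by
      intro hEq
      have h2 := List.append_inj_left hEq (by simp)
      exact hw (List.ofFn_injective h2)
    have hd := scheme_level_disjoint hA (List.ofFn w ++ [true]) (List.ofFn v ++ [true])
      (by simp) hne
    exact Set.notMem_empty x (hd ▸ ⟨hxw, hx⟩)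

lemma phiF_zero (n : ℕ) (x : K)
    (h : ∀ v : Fin n → Bool, x ∉ A (List.ofFn v ++ [true])) : phiF A n x = 0 :=
  Finset.sum_eq_zero fun v _ => Set.indicator_of_notMem (h v) _

lemma phiF_le (hA : IsClopenCantorScheme X A) (n : ℕ) (x : K) : phiF A n x ≤ cgeo n := by
  by_cases h : ∃ v : Fin n → Bool, x ∈ A (List.ofFn v ++ [true])
  · obtain ⟨v, hv⟩ := h
    rw [phiF_mem hA n x v hv]
  · push_neg at h
    rw [phiF_zero n x h]
    exact (cgeo_pos n).le

lemma phiF_summable (hA : IsClopenCantorScheme X A) (x : K) :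
    Summable fun n => phiF A n x :=
  cgeo_summable.of_nonneg_of_le (fun n => phiF_nonneg n x) (fun n => phiF_le hA n x)

noncomputable def crem (θ : ℝ) : ℕ → ℝ
  | 0 => θ
  | n + 1 => crem θ n - (if cgeo n ≤ crem θ n then cgeo n else 0)

lemma crem_bounds {θ : ℝ} (h0 : 0 ≤ θ) (h1 : θ ≤ 1) (n : ℕ) :
    0 ≤ crem θ n ∧ crem θ n ≤ (2:ℝ)⁻¹ ^ n := by
  induction n with
  | zero => simpa [crem] using ⟨h0, h1⟩
  | succ n ih =>
      have hsplit : (2:ℝ)⁻¹ ^ n = cgeo n + cgeo n := by rw [cgeo, pow_succ]; ring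
      have hc : (2:ℝ)⁻¹ ^ (n+1) = cgeo n := rfl
      by_cases h : cgeo n ≤ crem θ n
      · refine ⟨?_, ?_⟩ <;> simp only [crem, if_pos h, hc] <;> linarith [ih.1, ih.2]
      · push_neg at h
        refine ⟨?_, ?_⟩ <;> simp only [crem, if_neg (not_le.mpr h), hc] <;> linarith [ih.1]

lemma exists_phi [CompactSpace K] (hA : IsClopenCantorScheme X A) :
    ∃ φ : C(K, ℝ), (∀ x, 0 ≤ φ x) ∧ (∀ x, φ x ≤ 1) ∧ (∀ x, x ∉ X → φ x = 0) ∧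
      ∀ θ ∈ Set.Icc (0:ℝ) 1, ∃ x ∈ X, φ x = θ := by
  classical
  refine ⟨⟨fun x => ∑' n, phiF A n x, ?_⟩, ?_, ?_, ?_, ?_⟩
  · exact continuous_tsum (phiF_cont hA) cgeo_summable
      (fun n x => by rw [Real.norm_eq_abs, abs_of_nonneg (phiF_nonneg n x)]; exact phiF_le hA n x)
  · intro x
    simp only [ContinuousMap.coe_mk]
    exact tsum_nonneg fun n => phiF_nonneg n x
  · intro x
    simp only [ContinuousMap.coe_mk]
    calc ∑' n, phiF A n x ≤ ∑' n, cgeo n :=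
          Summable.tsum_le_tsum (fun n => phiF_le hA n x) (phiF_summable hA x) cgeo_summable
      _ = 1 := cgeo_tsum
  · intro x hx
    have hz : ∀ n, phiF A n x = 0 := fun n => phiF_zero n x fun v hv =>
      hx (scheme_subset_root hA _ hv)
    simp only [ContinuousMap.coe_mk]
    rw [tsum_congr hz, tsum_zero]
  · intro θ hθ
    obtain ⟨hθ0, hθ1⟩ := hθ
    set σ : ℕ → Bool := fun n => decide (cgeo n ≤ crem θ n) with hσ
    set e : ℕ → ℝ := fun n => if cgeo n ≤ crem θ n then cgeo n else 0 with he
    have hrem : ∀ n, crem θ (n+1) = crem θ n - e n := fun n => rfl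
    have hb := crem_bounds hθ0 hθ1
    have he_nonneg : ∀ n, 0 ≤ e n := by
      intro n; by_cases h : cgeo n ≤ crem θ n <;> simp [he, h, (cgeo_pos n).le]
    have he_le : ∀ n, e n ≤ cgeo n := by
      intro n; by_cases h : cgeo n ≤ crem θ n <;> simp [he, h, (cgeo_pos n).le]
    have he_summable : Summable e := cgeo_summable.of_nonneg_of_le he_nonneg he_le
    have hps : ∀ n, ∑ k ∈ Finset.range n, e k = θ - crem θ n := by
      intro n; induction n with
      | zero => simp [crem]
      | succ n ih => rw [Finset.sum_range_succ, ih, hrem n]; ring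
    have hrem0 : Filter.Tendsto (crem θ) Filter.atTop (nhds 0) :=
      squeeze_zero (fun n => (hb n).1) (fun n => (hb n).2)
        (tendsto_pow_atTop_nhds_zero_of_lt_one (by norm_num) (by norm_num))
    have hsum_e : ∑' n, e n = θ := by
      have h1 := he_summable.hasSum.tendsto_sum_nat
      have h2 : Filter.Tendsto (fun n => ∑ k ∈ Finset.range n, e k) Filter.atTop (nhds θ) := by
        simp only [hps]
        simpa using Filter.Tendsto.sub (tendsto_const_nhds (x := θ)) hrem0
      exact tendsto_nhds_unique h1 h2
    have hofn : ∀ n, List.ofFn (fun i : Fin (n+1) => σ i) =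
        (List.ofFn fun i : Fin n => σ i) ++ [σ n] := by
      intro n
      rw [List.ofFn_succ']
      simp [List.concat_eq_append]
    set C : ℕ → Set K := fun n => A (List.ofFn fun i : Fin n => σ i) with hC
    have hCsub : ∀ n, C (n+1) ⊆ C n := by
      intro n
      show A _ ⊆ A _
      rw [hofn n]
      exact hA.2.2.2.1 _ _
    obtain ⟨x, hx⟩ := IsCompact.nonempty_iInter_of_sequence_nonempty_isCompact_isClosed C
      hCsub (fun n => hA.2.1 _) ((hA.2.2.1 _).isClosed.isCompact)
      (fun n => (hA.2.2.1 _).isClosed)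
    have hxC : ∀ n, x ∈ C n := Set.mem_iInter.mp hx
    have hxX : x ∈ X := by
      have h0 := hxC 0
      have : C 0 = X := by rw [hC]; simp [hA.1]
      rwa [this] at h0
    refine ⟨x, hxX, ?_⟩
    simp only [ContinuousMap.coe_mk]
    have hFx : ∀ n, phiF A n x = e n := by
      intro n
      have hx1 : x ∈ A ((List.ofFn fun i : Fin n => σ i) ++ [σ n]) := by
        rw [← hofn n]; exact hxC (n+1)
      by_cases h : cgeo n ≤ crem θ n
      · have hσn : σ n = true := by simp [hσ, h]
        rw [hσn] at hx1
        rw [phiF_mem hA n x _ hx1, he]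
        simp [h]
      · have hσn : σ n = false := by simp [hσ, h]
        rw [hσn] at hx1
        have hnot : ∀ v : Fin n → Bool, x ∉ A (List.ofFn v ++ [true]) := by
          intro v hv
          have hne : List.ofFn v ++ [true] ≠ (List.ofFn fun i : Fin n => σ i) ++ [false] := by
            intro hEq
            have h2 := (List.append_inj hEq (by simp)).2
            simp at h2
          have hd := scheme_level_disjoint hA _ _ (by simp) hne
          exact Set.notMem_empty x (hd ▸ ⟨hv, hx1⟩)
        rw [phiF_zero n x hnot, he]
        simp [h]
    rw [tsum_congr hFx, hsum_e]

end Stmt4Aux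

/-- Under the hypotheses on `K`, `ι`, `U`, the set of functions in `C(K, ℝ)`
whose range is a nondegenerate closed interval contains, up to the zero function, an isometric
copy of `c₀(ι)`. -/
theorem stmt4 {K : Type*} [TopologicalSpace K] [CompactSpace K] [T2Space K]
    {ι : Type*} [TopologicalSpace ι] [DiscreteTopology ι] [Uncountable ι]
    (U : ι → Set K) (hne : ∀ α, (U α).Nonempty) (hclopen : ∀ α, IsClopen (U α))
    (hdisj : ∀ α β, α ≠ β → Disjoint (U α) (U β))
    (hscheme : ∀ α, ∃ A : List Bool → Set K, IsClopenCantorScheme (U α) A) :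
    ∃ T : C₀(ι, ℝ) →ₗᵢ[ℝ] C(K, ℝ),
      ∀ g : C₀(ι, ℝ), g ≠ 0 →
        ∃ a b : ℝ, a < b ∧ Set.range (T g) = Set.Icc a b := by
  classical
  have hK : Nonempty K := ⟨(hne (Classical.arbitrary ι)).some⟩
  choose φ hφ0 hφ1 hφz hφsurj using fun α => Stmt4Aux.exists_phi (hscheme α).choose_spec
  -- bound on finite partial sums
  have hsummand : ∀ (g : C₀(ι, ℝ)) (t : Finset ι) (x : K) (b : ℝ), 0 ≤ b →
      (∀ α ∈ t, |g α| ≤ b) → |∑ α ∈ t, (g α • φ α) x| ≤ b := by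
    intro g t x b hb hgb
    by_cases hex : ∃ α ∈ t, x ∈ U α
    · obtain ⟨α₀, hα₀t, hx⟩ := hex
      rw [Finset.sum_eq_single_of_mem α₀ hα₀t]
      · rw [ContinuousMap.smul_apply, smul_eq_mul, abs_mul]
        have h1 : |φ α₀ x| ≤ 1 := abs_le.mpr ⟨by linarith [hφ0 α₀ x], hφ1 α₀ x⟩
        calc |g α₀| * |φ α₀ x| ≤ |g α₀| * 1 :=
              mul_le_mul_of_nonneg_left h1 (abs_nonneg _)
          _ = |g α₀| := mul_one _
          _ ≤ b := hgb α₀ hα₀t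
      · intro β hβt hβne
        have hxβ : x ∉ U β := fun hxβ =>
          Set.disjoint_left.mp (hdisj β α₀ hβne) hxβ hx
        rw [ContinuousMap.smul_apply, smul_eq_mul, hφz β x hxβ, mul_zero]
    · push_neg at hex
      have : ∀ α ∈ t, (g α • φ α) x = 0 := by
        intro α hα
        rw [ContinuousMap.smul_apply, smul_eq_mul, hφz α x (hex α hα), mul_zero]
      rw [Finset.sum_eq_zero this, abs_zero]
      exact hb
  -- summability
  have hsummable : ∀ g : C₀(ι, ℝ), Summable (fun α => g α • φ α : ι → C(K, ℝ)) := by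
    intro g
    rw [summable_iff_vanishing_norm]
    intro ε hε
    have hco : Filter.Tendsto g (Filter.cocompact ι) (nhds 0) := g.zero_at_infty'
    rw [Filter.cocompact_eq_cofinite] at hco
    have hmem : g ⁻¹' Metric.ball 0 (ε / 2) ∈ Filter.cofinite :=
      hco (Metric.ball_mem_nhds 0 (by linarith))
    have hfin : (g ⁻¹' Metric.ball 0 (ε / 2))ᶜ.Finite := Filter.mem_cofinite.mp hmem
    refine ⟨hfin.toFinset, fun t ht => ?_⟩
    have hle : ‖∑ α ∈ t, g α • φ α‖ ≤ ε / 2 := by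
      rw [ContinuousMap.norm_le _ (by linarith)]
      intro x
      rw [ContinuousMap.sum_apply, Real.norm_eq_abs]
      apply hsummand g t x (ε / 2) (by linarith)
      intro α hα
      have hα' : α ∉ hfin.toFinset := Finset.disjoint_left.mp ht hα
      rw [Set.Finite.mem_toFinset] at hα'
      have : g α ∈ Metric.ball 0 (ε / 2) := by
        by_contra hc
        exact hα' hc
      rw [Metric.mem_ball, Real.dist_eq, sub_zero] at this
      exact this.le
    linarith
  set T0 : C₀(ι, ℝ) → C(K, ℝ) := fun g => ∑' α, g α • φ α with hT0
  have happly : ∀ (g : C₀(ι, ℝ)) (x : K), T0 g x = ∑' α, g α * φ α x := by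
    intro g x
    have h2 := (ContinuousMap.evalCLM (R := ℝ) x).map_tsum (hsummable g)
    simpa [ContinuousMap.evalCLM, ContinuousMap.smul_apply] using h2
  have hTmem : ∀ (g : C₀(ι, ℝ)) (α : ι) (x : K), x ∈ U α → T0 g x = g α * φ α x := by
    intro g α x hx
    rw [happly]
    apply tsum_eq_single
    intro β hβ
    have hxβ : x ∉ U β := fun hxβ => Set.disjoint_left.mp (hdisj β α hβ) hxβ hx
    rw [hφz β x hxβ, mul_zero]
  have hTnot : ∀ (g : C₀(ι, ℝ)) (x : K), (∀ α, x ∉ U α) → T0 g x = 0 := by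
    intro g x hx
    rw [happly]
    have : ∀ α, g α * φ α x = 0 := fun α => by rw [hφz α x (hx α), mul_zero]
    rw [tsum_congr this, tsum_zero]
  have hgnorm : ∀ (g : C₀(ι, ℝ)) (α : ι), |g α| ≤ ‖g‖ := by
    intro g α
    have h := BoundedContinuousFunction.norm_coe_le_norm g.toBCF α
    rw [ZeroAtInftyContinuousMap.norm_toBCF_eq_norm] at h
    exact le_trans (le_of_eq (Real.norm_eq_abs (g α)).symm) h
  have hnorm : ∀ g : C₀(ι, ℝ), ‖T0 g‖ = ‖g‖ := by
    intro g
    apply le_antisymm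
    · rw [ContinuousMap.norm_le _ (norm_nonneg g)]
      intro x
      rw [Real.norm_eq_abs]
      by_cases hex : ∃ α, x ∈ U α
      · obtain ⟨α, hα⟩ := hex
        rw [hTmem g α x hα, abs_mul]
        have h1 : |φ α x| ≤ 1 := abs_le.mpr ⟨by linarith [hφ0 α x], hφ1 α x⟩
        calc |g α| * |φ α x| ≤ |g α| * 1 := mul_le_mul_of_nonneg_left h1 (abs_nonneg _)
          _ = |g α| := mul_one _
          _ ≤ ‖g‖ := hgnorm g α
      · push_neg at hex
        rw [hTnot g x hex, abs_zero]
        exact norm_nonneg g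
    · have h : ‖g.toBCF‖ ≤ ‖T0 g‖ := by
        rw [BoundedContinuousFunction.norm_le (norm_nonneg (T0 g))]
        intro α
        obtain ⟨x, hxU, hφx⟩ := hφsurj α 1 ⟨zero_le_one, le_refl 1⟩
        have hTx : T0 g x = g α := by rw [hTmem g α x hxU, hφx, mul_one]
        calc ‖g.toBCF α‖ = ‖T0 g x‖ := by
              have : g.toBCF α = g α := rfl
              rw [this, hTx]
          _ ≤ ‖T0 g‖ := (T0 g).norm_coe_le_norm x
      rwa [ZeroAtInftyContinuousMap.norm_toBCF_eq_norm] at h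
  have hadd : ∀ g h : C₀(ι, ℝ), T0 (g + h) = T0 g + T0 h := by
    intro g h
    rw [hT0]
    have : ∀ α, (g + h) α • φ α = g α • φ α + h α • φ α := by
      intro α
      rw [ZeroAtInftyContinuousMap.coe_add, Pi.add_apply, add_smul]
    simp only [this]
    exact Summable.tsum_add (hsummable g) (hsummable h)
  have hsmul : ∀ (c : ℝ) (g : C₀(ι, ℝ)), T0 (c • g) = c • T0 g := by
    intro c g
    rw [hT0]
    have : ∀ α, (c • g) α • φ α = c • (g α • φ α) := by
      intro α
      rw [ZeroAtInftyContinuousMap.coe_smul, Pi.smul_apply, smul_smul, smul_eq_mul]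
    simp only [this]
    exact Summable.tsum_const_smul c (hsummable g)
  refine ⟨⟨⟨⟨T0, fun g h => hadd g h⟩, fun c g => by simpa using hsmul c g⟩, hnorm⟩, ?_⟩
  intro g hg
  show ∃ a b : ℝ, a < b ∧ Set.range (T0 g) = Set.Icc a b
  have hzero : ∃ x₀ : K, T0 g x₀ = 0 := by
    by_cases hcov : ∃ x : K, ∀ α, x ∉ U α
    · obtain ⟨x, hx⟩ := hcov
      exact ⟨x, hTnot g x hx⟩
    · exfalso
      push_neg at hcov
      obtain ⟨F, hF⟩ := IsCompact.elim_finite_subcover isCompact_univ U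
        (fun α => (hclopen α).isOpen) (fun x _ => Set.mem_iUnion.mpr (hcov x))
      obtain ⟨β, hβ⟩ := Infinite.exists_notMem_finset F
      obtain ⟨x, hx⟩ := hne β
      have hx2 : x ∈ ⋃ α ∈ F, U α := hF (Set.mem_univ x)
      rw [Set.mem_iUnion₂] at hx2
      obtain ⟨γ, hγF, hxγ⟩ := hx2
      have hγβ : γ ≠ β := fun h => hβ (h ▸ hγF)
      exact Set.disjoint_left.mp (hdisj γ β hγβ) hxγ hx
  obtain ⟨x₀, hx₀⟩ := hzero
  have huniv : (Set.univ : Set K).Nonempty := ⟨x₀, trivial⟩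
  obtain ⟨xa, -, hxa⟩ := isCompact_univ.exists_isMinOn huniv
    (T0 g).continuous.continuousOn
  obtain ⟨xb, -, hxb⟩ := isCompact_univ.exists_isMaxOn huniv
    (T0 g).continuous.continuousOn
  set a := T0 g xa with ha_def
  set b := T0 g xb with hb_def
  have hmin : ∀ y : K, a ≤ T0 g y := fun y => isMinOn_iff.mp hxa y (Set.mem_univ y)
  have hmax : ∀ y : K, T0 g y ≤ b := fun y => isMaxOn_iff.mp hxb y (Set.mem_univ y)
  have ha0 : a ≤ 0 := hx₀ ▸ hmin x₀
  have hb0 : 0 ≤ b := hx₀ ▸ hmax x₀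
  have hab : a < b := by
    rcases lt_or_ge a b with h | h
    · exact h
    · exfalso
      have hae : a = 0 := le_antisymm ha0 (le_trans hb0 h)
      have hbe : b = 0 := le_antisymm (le_trans h ha0) hb0
      have hT0g : T0 g = 0 := ContinuousMap.ext fun y => by
        have hy1 := hmax y
        have hy2 := hmin y
        rw [hbe] at hy1
        rw [hae] at hy2
        simpa using le_antisymm hy1 hy2
      have h2 := hnorm g
      rw [hT0g, norm_zero] at h2
      exact hg (by rwa [eq_comm, norm_eq_zero] at h2)
  refine ⟨a, b, hab, ?_⟩
  apply Set.Subset.antisymm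
  · rintro y ⟨x, rfl⟩
    exact ⟨hmin x, hmax x⟩
  · intro v hv
    obtain ⟨hva, hvb⟩ := hv
    rcases le_or_gt v 0 with hv0 | hv0
    · rcases eq_or_lt_of_le ha0 with hae | ha
      · have hveq : v = 0 := le_antisymm hv0 (hae ▸ hva)
        exact ⟨x₀, by rw [hx₀, hveq]⟩
      · have hexa : ∃ α, xa ∈ U α := by
          by_contra hno
          push_neg at hno
          have h0 := hTnot g xa hno
          rw [← ha_def] at h0
          exact absurd h0 (ne_of_lt ha)
        obtain ⟨α, hα⟩ := hexa
        have hval : a = g α * φ α xa := by rw [ha_def]; exact hTmem g α xa hα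
        obtain ⟨x1, hx1U, hx1⟩ := hφsurj α 1 ⟨zero_le_one, le_refl 1⟩
        have hga : T0 g x1 = g α := by rw [hTmem g α x1 hx1U, hx1, mul_one]
        have h1 : a ≤ g α := hga ▸ hmin x1
        have hgneg : g α < 0 := by
          by_contra hge
          push_neg at hge
          have hh : 0 ≤ a := hval ▸ mul_nonneg hge (hφ0 α xa)
          exact absurd hh (not_le.mpr ha)
        have h2 : g α ≤ a := by
          rw [hval]
          calc g α = g α * 1 := (mul_one _).symm
            _ ≤ g α * φ α xa := mul_le_mul_of_nonpos_left (hφ1 α xa) hgneg.le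
        have hgaa : g α = a := le_antisymm h2 h1
        have hdiv0 : 0 ≤ v / a := div_nonneg_of_nonpos hv0 ha.le
        have hdiv1 : v / a ≤ 1 := by
          rw [div_le_one_iff]
          exact Or.inr (Or.inr ⟨ha, hva⟩)
        obtain ⟨x, hxU, hφx⟩ := hφsurj α (v / a) ⟨hdiv0, hdiv1⟩
        refine ⟨x, ?_⟩
        rw [hTmem g α x hxU, hφx, hgaa, mul_comm, div_mul_cancel₀ v (ne_of_lt ha)]
    · have hb : 0 < b := lt_of_lt_of_le hv0 hvb
      have hexb : ∃ α, xb ∈ U α := by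
        by_contra hno
        push_neg at hno
        have h0 := hTnot g xb hno
        rw [← hb_def] at h0
        exact absurd h0 (ne_of_gt hb)
      obtain ⟨α, hα⟩ := hexb
      have hval : b = g α * φ α xb := by rw [hb_def]; exact hTmem g α xb hα
      obtain ⟨x1, hx1U, hx1⟩ := hφsurj α 1 ⟨zero_le_one, le_refl 1⟩
      have hga : T0 g x1 = g α := by rw [hTmem g α x1 hx1U, hx1, mul_one]
      have h1 : g α ≤ b := hga ▸ hmax x1
      have hgpos : 0 < g α := by
        by_contra hge
        push_neg at hge
        have hh : b ≤ 0 := by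
          rw [hval]
          exact mul_nonpos_iff.mpr (Or.inr ⟨hge, hφ0 α xb⟩)
        exact absurd hh (not_le.mpr hb)
      have h2 : b ≤ g α := by
        rw [hval]
        calc g α * φ α xb ≤ g α * 1 :=
              mul_le_mul_of_nonneg_left (hφ1 α xb) hgpos.le
          _ = g α := mul_one _
      have hgbb : g α = b := le_antisymm h1 h2
      have hdiv0 : 0 ≤ v / b := div_nonneg hv0.le hb.le
      have hdiv1 : v / b ≤ 1 := by rw [div_le_one hb]; exact hvb
      obtain ⟨x, hxU, hφx⟩ := hφsurj α (v / b) ⟨hdiv0, hdiv1⟩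
      refine ⟨x, ?_⟩
      rw [hTmem g α x hxU, hφx, hgbb, mul_comm, div_mul_cancel₀ v (ne_of_gt hb)]
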